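/- Indexed forests with support contained in the positive integers are in bijection with finitely supported sequences of nonnegative integers indexed by positive integers, via the map sending a forest F to the vector c(F) where c_i counts the internal nodes v of F whose leftmost descendant (obtained by following left edges down) has canonical label i. -/

import Mathlib

/-- Plane binary trees. `leaf` is a leaf, `node l r` an internal node. -/
inductive BT where
  | leaf : BT
  | node : BT → BT → BT
deriving DecidableEq

/-- Number of internal nodes. -/
def BT.size : BT → ℕ
  | .leaf => 0
  | .node l r => l.size + r.size + 1

/-- Multiset of values `ρ_F(v)` (canonical label of the leftmost descendant,
reached by following left edges) over the internal nodes of a tree whose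
inorder canonical labels start at `a`. -/
def BT.rhoMS : BT → ℤ → Multiset ℤ
  | .leaf, _ => 0
  | .node l r, a => a ::ₘ (l.rhoMS a + r.rhoMS (a + l.size + 1))

/-- Multiset of canonical labels of internal nodes whose left child is a leaf
("left support"). -/
def BT.lsuppMS : BT → ℤ → Multiset ℤ
  | .leaf, _ => 0
  | .node l r, a =>
      (if l = BT.leaf then ({a} : Multiset ℤ) else 0) + l.lsuppMS a
        + r.lsuppMS (a + l.size + 1)

/-- The flagged generating polynomial of a binary tree with inorder labels
starting at `a`, where every label is at least `lo` (lower bound transmitted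
from the parent), at most the `ρ`-value of the node, labels weakly increase
down left edges and strictly increase down right edges. The variables are
`x_1, x_2, …` (the variable `X 0` is unused). -/
noncomputable def BT.polyAux : BT → ℤ → ℕ → MvPolynomial ℕ ℚ
  | .leaf, _, _ => 1
  | .node l r, a, lo =>
      ∑ k ∈ Finset.Icc lo a.toNat,
        MvPolynomial.X k * l.polyAux a k * r.polyAux (a + l.size + 1) (k + 1)

/-- The forest polynomial of a single indexed tree with support starting at `a`. -/
noncomputable def BT.poly (t : BT) (a : ℤ) : MvPolynomial ℕ ℚ := t.polyAux a 1

/-- An indexed forest: a list of binary trees together with the starting points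
of their supports, the supports being maximal intervals (consecutive supports
leave a gap of at least one integer). -/
structure IndexedForest where
  trees : List (ℤ × BT)
  nonempty : ∀ p ∈ trees, p.2 ≠ BT.leaf
  gaps : trees.Chain' (fun p q => p.1 + (p.2.size : ℤ) + 1 ≤ q.1)

/-- The support of an indexed forest, as a set of integers. -/
def IndexedForest.Supp (F : IndexedForest) : Set ℤ :=
  {i | ∃ p ∈ F.trees, p.1 ≤ i ∧ i < p.1 + (p.2.size : ℤ)}

/-- The multiset of `ρ_F`-values of all internal nodes of `F`. -/
def IndexedForest.rhoMS (F : IndexedForest) : Multiset ℤ :=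
  (F.trees.map (fun p => p.2.rhoMS p.1)).sum

/-- The `ℕ`-vector `c(F)`: `c_i` counts internal nodes with `ρ_F`-value `i`. -/
def cOf (F : IndexedForest) : ℤ → ℕ := fun i => F.rhoMS.count i

/-- The multiset of left-support labels of `F`. -/
def IndexedForest.lsuppMS (F : IndexedForest) : Multiset ℤ :=
  (F.trees.map (fun p => p.2.lsuppMS p.1)).sum

/-- Forest polynomial of a list of located trees. -/
noncomputable def polyL (ts : List (ℤ × BT)) : MvPolynomial ℕ ℚ :=
  (ts.map (fun p => p.2.poly p.1)).prod

/-- The forest polynomial of an indexed forest. -/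
noncomputable def IndexedForest.poly (F : IndexedForest) : MvPolynomial ℕ ℚ :=
  polyL F.trees

/-- Number of internal nodes of a forest. -/
def IndexedForest.size (F : IndexedForest) : ℕ :=
  (F.trees.map (fun p => p.2.size)).sum

/-! ## Auxiliary lemmas -/

open Multiset

/-- prefix count -/
def pc (m : Multiset ℤ) (a : ℤ) (k : ℕ) : ℕ := (m.filter (fun x => x < a + (k:ℤ))).card

lemma pc_mono (m : Multiset ℤ) (a : ℤ) {k k' : ℕ} (h : k ≤ k') : pc m a k ≤ pc m a k' := by
  apply Multiset.card_le_card
  apply Multiset.monotone_filter_right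
  intro x hx
  exact lt_of_lt_of_le hx (by have : (k:ℤ) ≤ k' := (by exact_mod_cast h); omega)

lemma pc_le_card (m : Multiset ℤ) (a : ℤ) (k : ℕ) : pc m a k ≤ m.card :=
  Multiset.card_le_card (Multiset.filter_le _ m)

lemma pc_add (m m' : Multiset ℤ) (a : ℤ) (k : ℕ) : pc (m + m') a k = pc m a k + pc m' a k := by
  simp [pc, Multiset.filter_add]

lemma BT.card_rhoMS (t : BT) (a : ℤ) : (t.rhoMS a).card = t.size := by
  induction t generalizing a with
  | leaf => simp [BT.rhoMS, BT.size]
  | node l r ihl ihr =>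
    simp [BT.rhoMS, BT.size, ihl, ihr]

lemma BT.mem_rhoMS {t : BT} {a x : ℤ} (hx : x ∈ t.rhoMS a) :
    a ≤ x ∧ x < a + (t.size : ℤ) := by
  induction t generalizing a with
  | leaf => simp [BT.rhoMS] at hx
  | node l r ihl ihr =>
    simp only [BT.rhoMS, Multiset.mem_cons, Multiset.mem_add] at hx
    have hs : ((BT.node l r).size : ℤ) = (l.size : ℤ) + (r.size : ℤ) + 1 := by
      simp [BT.size]
    rcases hx with h | h | h
    · subst h; exact ⟨le_refl x, by rw [hs]; omega⟩
    · obtain ⟨h1, h2⟩ := ihl h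
      exact ⟨h1, by rw [hs]; omega⟩
    · obtain ⟨h1, h2⟩ := ihr h
      exact ⟨by omega, by rw [hs]; omega⟩

lemma pc_base (m : Multiset ℤ) {a b : ℤ} {k j : ℕ} (h : a + (k:ℤ) = b + (j:ℤ)) :
    pc m a k = pc m b j := by
  simp only [pc, h]

lemma pc_cons (x : ℤ) (m : Multiset ℤ) (a : ℤ) (k : ℕ) :
    pc (x ::ₘ m) a k = (if x < a + (k:ℤ) then 1 else 0) + pc m a k := by
  simp only [pc, Multiset.filter_cons]
  split <;> simp <;> omega

lemma BT.pc_rhoMS_ge (t : BT) (a : ℤ) : ∀ k : ℕ, k ≤ t.size → k ≤ pc (t.rhoMS a) a k := by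
  induction t generalizing a with
  | leaf =>
    intro k hk
    have : k = 0 := Nat.le_zero.mp hk
    simp [this]
  | node l r ihl ihr =>
    intro k hk
    rcases Nat.eq_zero_or_pos k with h0 | h1
    · simp [h0]
    have hsz : (BT.node l r).size = l.size + r.size + 1 := rfl
    rw [BT.rhoMS, pc_cons, pc_add, if_pos (by omega : a < a + (k:ℤ))]
    by_cases hcase : k ≤ l.size + 1
    · have h2 : (k - 1 : ℕ) ≤ pc (l.rhoMS a) a (k-1) := ihl a (k-1) (by omega)
      have h3 : pc (l.rhoMS a) a (k-1) ≤ pc (l.rhoMS a) a k := pc_mono _ _ (by omega)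
      omega
    · have h2 : l.size ≤ pc (l.rhoMS a) a k := by
        have := ihl a l.size le_rfl
        have := pc_mono (l.rhoMS a) a (show l.size ≤ k by omega)
        omega
      have h3 : (k - l.size - 1 : ℕ) ≤ pc (r.rhoMS (a + l.size + 1)) a k := by
        have hb : (a + (l.size:ℤ) + 1) + ((k - l.size - 1 : ℕ) : ℤ) = a + (k:ℤ) := by
          push_cast [Nat.cast_sub (by omega : l.size + 1 ≤ k)]
          omega
        rw [pc_base _ hb.symm]
        exact ihr _ _ (by omega)
      omega

lemma BT.pc_node_left (l r : BT) (a : ℤ) :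
    pc ((BT.node l r).rhoMS a) a (l.size + 1) = l.size + 1 := by
  rw [BT.rhoMS, pc_cons, pc_add, if_pos (by push_cast; omega : a < a + ((l.size + 1 : ℕ):ℤ))]
  have hL : pc (l.rhoMS a) a (l.size + 1) = l.size := by
    rw [pc, Multiset.filter_eq_self.2, BT.card_rhoMS]
    intro x hx
    have := BT.mem_rhoMS hx
    push_cast
    omega
  have hR : pc (r.rhoMS (a + l.size + 1)) a (l.size + 1) = 0 := by
    rw [pc, Multiset.card_eq_zero, Multiset.filter_eq_nil]
    intro x hx
    have := BT.mem_rhoMS hx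
    push_cast
    omega
  omega

lemma BT.pc_node_lt (l r : BT) (a : ℤ) {k : ℕ} (hk : k < l.size) :
    k + 2 ≤ pc ((BT.node l r).rhoMS a) a (k+1) := by
  rw [BT.rhoMS, pc_cons, pc_add, if_pos (by push_cast; omega : a < a + ((k + 1 : ℕ):ℤ))]
  have := BT.pc_rhoMS_ge l a (k+1) (by omega)
  omega

lemma BT.size_eq_zero {t : BT} (h : t.size = 0) : t = BT.leaf := by
  cases t with
  | leaf => rfl
  | node l r => simp [BT.size] at h

lemma BT.rhoMS_inj : ∀ t t' : BT, ∀ a : ℤ, t.rhoMS a = t'.rhoMS a → t = t' := by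
  intro t
  induction t with
  | leaf =>
    intro t' a h
    cases t' with
    | leaf => rfl
    | node l' r' => simp [BT.rhoMS] at h
  | node l r ihl ihr =>
    intro t' a h
    cases t' with
    | leaf => simp [BT.rhoMS] at h
    | node l' r' =>
      have hn : l.size = l'.size := by
        rcases lt_trichotomy l.size l'.size with hlt | heq | hgt
        · exfalso
          have h1 := BT.pc_node_left l r a
          have h2 := BT.pc_node_lt l' r' a hlt
          rw [h] at h1
          omega
        · exact heq
        · exfalso
          have h1 := BT.pc_node_left l' r' a
          have h2 := BT.pc_node_lt l r a hgt
          rw [← h] at h1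
          omega
      rw [BT.rhoMS, BT.rhoMS, ← hn, Multiset.cons_inj_right] at h
      have split : ∀ (L R : Multiset ℤ) (n : ℕ), (∀ x ∈ L, x < a + (n:ℤ)) →
          (∀ x ∈ R, a + (n:ℤ) + 1 ≤ x) →
          (L + R).filter (fun x => x < a + (n:ℤ)) = L ∧
          (L + R).filter (fun x => ¬ x < a + (n:ℤ)) = R := by
        intro L R n hL hR
        rw [Multiset.filter_add, Multiset.filter_add]
        constructor
        · rw [Multiset.filter_eq_self.2 hL, Multiset.filter_eq_nil.2, add_zero]
          intro x hx; have := hR x hx; omega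
        · rw [Multiset.filter_eq_nil.2, Multiset.filter_eq_self.2, zero_add]
          · intro x hx; have := hR x hx; omega
          · intro x hx; have := hL x hx; omega
      obtain ⟨k1, k2⟩ := split (l.rhoMS a) (r.rhoMS (a + l.size + 1)) l.size
        (fun x hx => (BT.mem_rhoMS hx).2)
        (fun x hx => by have := (BT.mem_rhoMS hx).1; omega)
      obtain ⟨k1', k2'⟩ := split (l'.rhoMS a) (r'.rhoMS (a + l.size + 1)) l.size
        (fun x hx => by have := (BT.mem_rhoMS hx).2; rw [hn]; exact this)
        (fun x hx => by have := (BT.mem_rhoMS hx).1; omega)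
      rw [h] at k1 k2
      rw [ihl _ _ (k1.symm.trans k1'), ihr _ _ (k2.symm.trans k2')]

lemma exists_tree : ∀ n : ℕ, ∀ (m : Multiset ℤ) (a : ℤ), m.card = n →
    (∀ x ∈ m, a ≤ x ∧ x < a + (n:ℤ)) →
    (∀ k : ℕ, 1 ≤ k → k ≤ n → k ≤ pc m a k) →
    ∃ t : BT, t.size = n ∧ t.rhoMS a = m := by
  intro n
  induction n using Nat.strong_induction_on with
  | _ n ih =>
  intro m a hcard hmem hpre
  rcases Nat.eq_zero_or_pos n with h0 | h1
  · refine ⟨BT.leaf, by simp [BT.size, h0], ?_⟩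
    rw [BT.rhoMS]
    rw [h0] at hcard
    exact (Multiset.card_eq_zero.1 hcard).symm
  -- a ∈ m
  have ha : a ∈ m := by
    have h2 := hpre 1 le_rfl h1
    rw [pc] at h2
    have hne : m.filter (fun x => x < a + ((1:ℕ):ℤ)) ≠ 0 := by
      intro hz
      rw [hz] at h2
      simp at h2
    obtain ⟨x, hx⟩ := Multiset.exists_mem_of_ne_zero hne
    have hx2 := Multiset.mem_filter.1 hx
    have h3 := hmem x hx2.1
    have h4 := hx2.2
    have h5 : x = a := by push_cast at h4; omega
    exact h5 ▸ hx2.1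
  set s : Multiset ℤ := m.erase a with hs
  have hcons : m = a ::ₘ s := (Multiset.cons_erase ha).symm
  have hsmem : ∀ x ∈ s, a ≤ x ∧ x < a + (n:ℤ) :=
    fun x hx => hmem x (Multiset.mem_of_mem_erase hx)
  have hscard : s.card = n - 1 := by
    rw [Multiset.card_erase_of_mem ha, hcard]; rfl
  have hpc_cons : ∀ k : ℕ, 1 ≤ k → pc m a k = 1 + pc s a k := by
    intro k hk
    rw [hcons, pc_cons, if_pos (by push_cast; omega)]
  have hpc0 : ∀ (u : Multiset ℤ), (∀ x ∈ u, a ≤ x) → pc u a 0 = 0 := by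
    intro u hu
    rw [pc, Multiset.card_eq_zero, Multiset.filter_eq_nil]
    intro x hx
    have := hu x hx; push_cast; omega
  -- the split point
  have hex : ∃ k, pc m a (k+1) ≤ k+1 := by
    refine ⟨n-1, ?_⟩
    have h5 : n - 1 + 1 = n := by omega
    rw [h5]
    have := pc_le_card m a n
    omega
  set nl := Nat.find hex with hnl_def
  have hspec : pc m a (nl+1) ≤ nl+1 := Nat.find_spec hex
  have hnl_le : nl ≤ n - 1 := Nat.find_le (by
    have h5 : n - 1 + 1 = n := by omega
    rw [h5]
    have := pc_le_card m a n
    omega)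
  have hSnl1 : pc m a (nl+1) = nl+1 := le_antisymm hspec (hpre (nl+1) (by omega) (by omega))
  have hlow : ∀ k : ℕ, 1 ≤ k → k ≤ nl → k + 1 ≤ pc m a k := by
    intro k hk1 hk2
    have h5 := Nat.find_min hex (show k - 1 < nl by omega)
    have h6 : k - 1 + 1 = k := by omega
    rw [h6] at h5
    omega
  have hSnl : pc m a nl = nl + 1 ∨ nl = 0 := by
    rcases Nat.eq_zero_or_pos nl with h | h
    · right; exact h
    · left
      have h5 := hlow nl h le_rfl
      have h6 := pc_mono m a (show nl ≤ nl + 1 by omega)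
      omega
  -- split s into left and right parts
  set ml : Multiset ℤ := s.filter (fun x => x < a + (nl:ℤ)) with hml
  set mr : Multiset ℤ := s.filter (fun x => ¬ x < a + (nl:ℤ)) with hmr
  have hsplit : s = ml + mr := (Multiset.filter_add_not _ s).symm
  have hpcs : ∀ k : ℕ, 1 ≤ k → pc s a k + 1 = pc m a k := by
    intro k hk; rw [hpc_cons k hk]; omega
  have hcard_ml : ml.card = nl := by
    rcases Nat.eq_zero_or_pos nl with h | h
    · rw [h]
      rw [hml, Multiset.card_eq_zero, Multiset.filter_eq_nil]
      intro x hx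
      have := hsmem x hx
      rw [h]
      push_cast
      omega
    · have h5 : ml.card = pc s a nl := rfl
      have h6 := hpcs nl h
      rcases hSnl with h7 | h7
      · omega
      · omega
  -- no element of s equals a + nl
  have hnot : ∀ x ∈ s, x ≠ a + (nl:ℤ) := by
    intro x hx hxe
    -- derive contradiction via counting
    have h5 : pc s a nl + 1 ≤ pc s a (nl+1) := by
      have hcx : s = x ::ₘ s.erase x := (Multiset.cons_erase hx).symm
      rw [hcx, pc_cons, pc_cons, if_neg (by rw [hxe]; push_cast; omega),
        if_pos (by rw [hxe]; push_cast; omega)]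
      have := pc_mono (s.erase x) a (show nl ≤ nl + 1 by omega)
      omega
    have h6 := hpcs (nl+1) (by omega)
    rcases hSnl with h7 | h7
    · have h8 := hpcs nl (by omega)
      omega
    · have h8 : pc s a nl = 0 := by
        rw [h7]
        exact hpc0 s (fun y hy => (hsmem y hy).1)
      rw [h7] at h5 h6 h8 hSnl1
      omega
  have hmr_mem : ∀ x ∈ mr, a + (nl:ℤ) + 1 ≤ x ∧ x < a + (n:ℤ) := by
    intro x hx
    rw [hmr, Multiset.mem_filter] at hx
    have h5 := hsmem x hx.1
    have h6 := hnot x hx.1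
    have h7 := hx.2
    constructor
    · omega
    · exact h5.2
  have hml_mem : ∀ x ∈ ml, a ≤ x ∧ x < a + (nl:ℤ) := by
    intro x hx
    rw [hml, Multiset.mem_filter] at hx
    exact ⟨(hsmem x hx.1).1, hx.2⟩
  -- prefix condition for ml
  have hml_pre : ∀ k : ℕ, 1 ≤ k → k ≤ nl → k ≤ pc ml a k := by
    intro k hk1 hk2
    have h5 : pc ml a k = pc s a k := by
      rw [hml, pc, pc, Multiset.filter_filter]
      congr 1
      apply Multiset.filter_congr
      intro x hx
      have hkn : (k:ℤ) ≤ (nl:ℤ) := by exact_mod_cast hk2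
      constructor <;> intro h
      · omega
      · omega
    have h6 := hpcs k hk1
    have h7 := hlow k hk1 hk2
    omega
  obtain ⟨l, hl_size, hl_rho⟩ := ih nl (by omega) ml a hcard_ml hml_mem hml_pre
  -- right part
  set b : ℤ := a + (nl:ℤ) + 1 with hb
  set nr : ℕ := n - 1 - nl with hnr
  have hcard_mr : mr.card = nr := by
    have h5 : s.card = ml.card + mr.card := by rw [hsplit, Multiset.card_add]
    omega
  have hmr_mem' : ∀ x ∈ mr, b ≤ x ∧ x < b + (nr:ℤ) := by
    intro x hx
    have h5 := hmr_mem x hx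
    have h6 : b + (nr:ℤ) = a + (n:ℤ) := by rw [hb, hnr]; push_cast; omega
    rw [hb, h6]
    exact h5
  have hmr_pre : ∀ j : ℕ, 1 ≤ j → j ≤ nr → j ≤ pc mr b j := by
    intro j hj1 hj2
    have hK : b + (j:ℤ) = a + ((nl + 1 + j : ℕ):ℤ) := by rw [hb]; push_cast; omega
    have h5 : pc mr b j = pc mr a (nl+1+j) := pc_base mr hK
    have h6 : pc s a (nl+1+j) = pc ml a (nl+1+j) + pc mr a (nl+1+j) := by
      rw [hsplit, pc_add]
    have h7 : pc ml a (nl+1+j) = nl := by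
      rw [← hcard_ml, pc, Multiset.filter_eq_self.2]
      intro x hx
      have := hml_mem x hx
      push_cast
      omega
    have h8 := hpcs (nl+1+j) (by omega)
    have h9 := hpre (nl+1+j) (by omega) (by omega)
    omega
  obtain ⟨r, hr_size, hr_rho⟩ := ih nr (by omega) mr b hcard_mr hmr_mem' hmr_pre
  refine ⟨BT.node l r, ?_, ?_⟩
  · rw [BT.size, hl_size, hr_size]; omega
  · rw [BT.rhoMS, hl_size, hl_rho, ← hb, hr_rho, ← hsplit, ← hcons]

/-! ## Forest level -/

def msum (ts : List (ℤ × BT)) : Multiset ℤ := (ts.map (fun p => p.2.rhoMS p.1)).sum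

lemma BT.size_pos {t : BT} (h : t ≠ BT.leaf) : 0 < t.size := by
  cases t with
  | leaf => exact absurd rfl h
  | node l r => simp [BT.size]

lemma BT.ne_leaf_of_size_pos {t : BT} (h : 0 < t.size) : t ≠ BT.leaf := by
  intro he; rw [he] at h; simp [BT.size] at h

lemma BT.start_mem_rhoMS {t : BT} (h : t ≠ BT.leaf) (a : ℤ) : a ∈ t.rhoMS a := by
  cases t with
  | leaf => exact absurd rfl h
  | node l r => rw [BT.rhoMS]; exact Multiset.mem_cons_self _ _

lemma mem_msum {ts : List (ℤ × BT)} {x : ℤ} :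
    x ∈ msum ts ↔ ∃ p ∈ ts, x ∈ p.2.rhoMS p.1 := by
  induction ts with
  | nil => simp [msum]
  | cons p rest ih =>
    simp only [msum, List.map_cons, List.sum_cons, Multiset.mem_add, List.mem_cons]
    rw [show (List.map (fun p => p.2.rhoMS p.1) rest).sum = msum rest from rfl] at *
    constructor
    · rintro (h | h)
      · exact ⟨p, Or.inl rfl, h⟩
      · obtain ⟨q, hq, hx⟩ := ih.1 h
        exact ⟨q, Or.inr hq, hx⟩
    · rintro ⟨q, (rfl | hq), hx⟩
      · exact Or.inl hx
      · exact Or.inr (ih.2 ⟨q, hq, hx⟩)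

lemma forest_lb : ∀ ts : List (ℤ × BT),
    ts.Chain' (fun p q => p.1 + (p.2.size : ℤ) + 1 ≤ q.1) →
    ∀ b : ℤ, (∀ p ∈ ts.head?, b ≤ p.1) → ∀ x ∈ msum ts, b ≤ x := by
  intro ts
  induction ts with
  | nil => intro _ b _ x hx; simp [msum] at hx
  | cons p rest ih =>
    intro hch b hb x hx
    unfold List.Chain' at hch; rw [List.isChain_cons] at hch
    have hbp : b ≤ p.1 := hb p rfl
    rw [msum, List.map_cons, List.sum_cons] at hx
    rcases Multiset.mem_add.1 hx with h | h
    · have := BT.mem_rhoMS h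
      omega
    · refine ih hch.2 b ?_ x h
      intro q hq
      have := hch.1 q hq
      have := BT.size_pos (t := p.2)
      -- p.2.size ≥ 0 always
      have hsz : (0:ℤ) ≤ (p.2.size : ℤ) := by positivity
      omega

lemma msum_ne_zero {a : ℤ} {t : BT} {rest : List (ℤ × BT)} (ht : t ≠ BT.leaf) :
    msum ((a, t) :: rest) ≠ 0 := by
  intro h
  have : a ∈ msum ((a, t) :: rest) := mem_msum.2 ⟨(a, t), List.mem_cons_self,
    BT.start_mem_rhoMS ht a⟩
  rw [h] at this
  simp at this

lemma forest_inj : ∀ ts ts' : List (ℤ × BT),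
    (∀ p ∈ ts, p.2 ≠ BT.leaf) → ts.Chain' (fun p q => p.1 + (p.2.size : ℤ) + 1 ≤ q.1) →
    (∀ p ∈ ts', p.2 ≠ BT.leaf) → ts'.Chain' (fun p q => p.1 + (p.2.size : ℤ) + 1 ≤ q.1) →
    msum ts = msum ts' → ts = ts' := by
  intro ts
  induction ts with
  | nil =>
    intro ts' _ _ hnl' _ h
    cases ts' with
    | nil => rfl
    | cons p rest =>
      exact absurd h.symm (by
        obtain ⟨a, t⟩ := p
        exact msum_ne_zero (hnl' (a, t) (List.mem_cons_self)))
  | cons p rest ih =>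
    intro ts' hnl hch hnl' hch' h
    obtain ⟨a, t⟩ := p
    cases ts' with
    | nil =>
      exact absurd h (msum_ne_zero (hnl (a, t) (List.mem_cons_self)))
    | cons p' rest' =>
      obtain ⟨a', t'⟩ := p'
      have ht : t ≠ BT.leaf := hnl (a, t) (List.mem_cons_self)
      have ht' : t' ≠ BT.leaf := hnl' (a', t') (List.mem_cons_self)
      -- both a and a' are minimum of M
      have key_min : ∀ (b : ℤ) (u : BT) (us : List (ℤ × BT)), u ≠ BT.leaf →
          ((b, u) :: us).Chain' (fun p q => p.1 + (p.2.size : ℤ) + 1 ≤ q.1) →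
          b ∈ msum ((b, u) :: us) ∧ ∀ x ∈ msum ((b, u) :: us), b ≤ x := by
        intro b u us hu hc
        refine ⟨mem_msum.2 ⟨(b, u), List.mem_cons_self, BT.start_mem_rhoMS hu b⟩, ?_⟩
        exact forest_lb _ hc b (fun q hq => by simp at hq; rw [← hq])
      obtain ⟨hmem1, hmin1⟩ := key_min a t rest ht hch
      obtain ⟨hmem2, hmin2⟩ := key_min a' t' rest' ht' hch'
      have haa : a = a' := by
        rw [← h] at hmem2 hmin2
        exact le_antisymm (hmin1 a' hmem2) (hmin2 a hmem1)
      subst haa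
      -- the size of the first tree is determined
      have key_pc : ∀ (u : BT) (us : List (ℤ × BT)), u ≠ BT.leaf →
          ((a, u) :: us).Chain' (fun p q => p.1 + (p.2.size : ℤ) + 1 ≤ q.1) →
          (∀ k : ℕ, k < u.size → k + 1 ≤ pc (msum ((a, u) :: us)) a (k + 1)) ∧
          pc (msum ((a, u) :: us)) a (u.size + 1) ≤ u.size := by
        intro u us hu hc
        have hdecomp : msum ((a, u) :: us) = u.rhoMS a + msum us := by
          simp [msum]
        have hrest_lb : ∀ x ∈ msum us, a + (u.size : ℤ) + 1 ≤ x := by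
          apply forest_lb us (List.IsChain.tail hc)
          intro q hq
          unfold List.Chain' at hc; rw [List.isChain_cons] at hc
          exact hc.1 q hq
        constructor
        · intro k hk
          rw [hdecomp, pc_add]
          have := BT.pc_rhoMS_ge u a (k + 1) (by omega)
          omega
        · rw [hdecomp, pc_add]
          have h1 : pc (u.rhoMS a) a (u.size + 1) ≤ u.size := by
            have := pc_le_card (u.rhoMS a) a (u.size + 1)
            rw [BT.card_rhoMS] at this
            exact this
          have h2 : pc (msum us) a (u.size + 1) = 0 := by
            rw [pc, Multiset.card_eq_zero, Multiset.filter_eq_nil]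
            intro x hx
            have := hrest_lb x hx
            push_cast
            omega
          omega
      obtain ⟨hlow1, hup1⟩ := key_pc t rest ht hch
      obtain ⟨hlow2, hup2⟩ := key_pc t' rest' ht' hch'
      rw [← h] at hlow2 hup2
      have hsize : t.size = t'.size := by
        rcases lt_trichotomy t.size t'.size with hlt | he | hgt
        · have := hlow2 t.size hlt
          omega
        · exact he
        · have := hlow1 t'.size hgt
          omega
      -- split M and conclude
      have hsplit : ∀ (u : BT) (us : List (ℤ × BT)), u.size = t.size →
          (∀ x ∈ msum us, a + (t.size : ℤ) + 1 ≤ x) →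
          (msum ((a, u) :: us)).filter (fun x => x < a + (t.size : ℤ)) = u.rhoMS a ∧
          (msum ((a, u) :: us)).filter (fun x => ¬ x < a + (t.size : ℤ)) = msum us := by
        intro u us hus hlb
        have hdecomp : msum ((a, u) :: us) = u.rhoMS a + msum us := by simp [msum]
        rw [hdecomp, Multiset.filter_add, Multiset.filter_add]
        constructor
        · rw [Multiset.filter_eq_self.2, Multiset.filter_eq_nil.2, add_zero]
          · intro x hx; have := hlb x hx; simp; omega
          · intro x hx; have := BT.mem_rhoMS hx; rw [hus] at this; omega
        · rw [Multiset.filter_eq_nil.2, Multiset.filter_eq_self.2, zero_add]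
          · intro x hx; have := hlb x hx; simp; omega
          · intro x hx; have := BT.mem_rhoMS hx; rw [hus] at this; omega
      have hrest_lb1 : ∀ x ∈ msum rest, a + (t.size : ℤ) + 1 ≤ x := by
        apply forest_lb rest (List.IsChain.tail hch)
        intro q hq
        unfold List.Chain' at hch; rw [List.isChain_cons] at hch
        exact hch.1 q hq
      have hrest_lb2 : ∀ x ∈ msum rest', a + (t.size : ℤ) + 1 ≤ x := by
        rw [hsize]
        apply forest_lb rest' (List.IsChain.tail hch')
        intro q hq
        unfold List.Chain' at hch'; rw [List.isChain_cons] at hch'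
        exact hch'.1 q hq
      obtain ⟨s1, s2⟩ := hsplit t rest rfl hrest_lb1
      obtain ⟨s1', s2'⟩ := hsplit t' rest' hsize.symm hrest_lb2
      rw [← h] at s1' s2'
      have hteq : t = t' := BT.rhoMS_inj t t' a (by rw [← s1, s1'])
      have hrest : rest = rest' := by
        apply ih rest' (fun q hq => hnl q (List.mem_cons_of_mem _ hq))
          (List.IsChain.tail hch) (fun q hq => hnl' q (List.mem_cons_of_mem _ hq))
          (List.IsChain.tail hch')
        rw [← s2, s2']
      rw [hteq, hrest]

lemma forest_ex : ∀ N : ℕ, ∀ M : Multiset ℤ, M.card ≤ N → ∀ b : ℤ, (∀ x ∈ M, b ≤ x) →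
    ∃ ts : List (ℤ × BT), (∀ p ∈ ts, p.2 ≠ BT.leaf) ∧
      ts.Chain' (fun p q => p.1 + (p.2.size : ℤ) + 1 ≤ q.1) ∧
      (∀ p ∈ ts, b ≤ p.1) ∧ msum ts = M := by
  intro N
  induction N using Nat.strong_induction_on with
  | _ N ihN =>
  intro M hcard b hb
  rcases eq_or_ne M 0 with h0 | h0
  · exact ⟨[], by simp, List.isChain_nil, by simp, by simp [msum, h0]⟩
  have hMne : M.toFinset.Nonempty := by
    obtain ⟨x, hx⟩ := Multiset.exists_mem_of_ne_zero h0
    exact ⟨x, Multiset.mem_toFinset.2 hx⟩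
  set a : ℤ := M.toFinset.min' hMne with ha_def
  have haM : a ∈ M := Multiset.mem_toFinset.1 (M.toFinset.min'_mem hMne)
  have hamin : ∀ x ∈ M, a ≤ x := fun x hx => M.toFinset.min'_le x (Multiset.mem_toFinset.2 hx)
  have hba : b ≤ a := hb a haM
  have hcpos : 1 ≤ M.card := by
    rcases Multiset.card_pos.2 h0 with h
    omega
  -- find the first crossing point n
  have hex : ∃ k : ℕ, pc M a (k + 2) ≤ k + 1 := by
    refine ⟨M.card - 1, ?_⟩
    have h5 : M.card - 1 + 2 = M.card + 1 := by omega
    rw [h5]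
    have h6 : pc M a (M.card + 1) ≤ M.card := by
      have := pc_le_card M a (M.card + 1)
      omega
    omega
  set n : ℕ := Nat.find hex + 1 with hn_def
  have hspec : pc M a (n + 1) ≤ n := by
    have := Nat.find_spec hex
    have h5 : Nat.find hex + 2 = n + 1 := by omega
    rwa [h5] at this
  have hlow : ∀ k : ℕ, 1 ≤ k → k ≤ n → k ≤ pc M a k := by
    intro k hk1 hk2
    rcases Nat.eq_or_lt_of_le hk1 with h1 | h1
    · rw [← h1]
      rw [pc]
      have hmf : a ∈ M.filter (fun x => x < a + ((1:ℕ):ℤ)) :=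
        Multiset.mem_filter.2 ⟨haM, by push_cast; omega⟩
      have h7 : M.filter (fun x => x < a + ((1:ℕ):ℤ)) ≠ 0 := by
        intro hz; rw [hz] at hmf; simp at hmf
      have := Multiset.card_pos.2 h7
      show 1 ≤ (M.filter (fun x => x < a + ((1:ℕ):ℤ))).card
      omega
    · have h5 := Nat.find_min hex (show k - 2 < Nat.find hex by omega)
      have h6 : k - 2 + 2 = k := by omega
      rw [h6] at h5
      omega
  have hSn : pc M a n = n := by
    have h5 := hlow n (by omega) le_rfl
    have h6 := pc_mono M a (show n ≤ n + 1 by omega)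
    omega
  -- split
  set m1 : Multiset ℤ := M.filter (fun x => x < a + (n:ℤ)) with hm1
  set m2 : Multiset ℤ := M.filter (fun x => ¬ x < a + (n:ℤ)) with hm2
  have hsplit : m1 + m2 = M := Multiset.filter_add_not _ M
  have hcard1 : m1.card = n := hSn
  have hmem1 : ∀ x ∈ m1, a ≤ x ∧ x < a + (n:ℤ) := by
    intro x hx
    rw [hm1, Multiset.mem_filter] at hx
    exact ⟨hamin x hx.1, hx.2⟩
  have hpre1 : ∀ k : ℕ, 1 ≤ k → k ≤ n → k ≤ pc m1 a k := by
    intro k hk1 hk2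
    have h5 : pc m1 a k = pc M a k := by
      rw [hm1, pc, pc, Multiset.filter_filter]
      congr 1
      apply Multiset.filter_congr
      intro x hx
      have hkn : (k:ℤ) ≤ (n:ℤ) := by exact_mod_cast hk2
      constructor <;> intro h
      · omega
      · omega
    rw [h5]
    exact hlow k hk1 hk2
  obtain ⟨t, ht_size, ht_rho⟩ := exists_tree n m1 a hcard1 hmem1 hpre1
  have ht_ne : t ≠ BT.leaf := BT.ne_leaf_of_size_pos (by omega)
  -- no element equals a + n
  have hnot : ∀ x ∈ M, x ≠ a + (n:ℤ) := by
    intro x hx hxe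
    have h5 : pc M a n + 1 ≤ pc M a (n + 1) := by
      have hcx : M = x ::ₘ M.erase x := (Multiset.cons_erase hx).symm
      rw [hcx, pc_cons, pc_cons, if_neg (by rw [hxe]; push_cast; omega),
        if_pos (by rw [hxe]; push_cast; omega)]
      have := pc_mono (M.erase x) a (show n ≤ n + 1 by omega)
      omega
    omega
  have hmem2 : ∀ x ∈ m2, a + (n:ℤ) + 1 ≤ x := by
    intro x hx
    rw [hm2, Multiset.mem_filter] at hx
    have := hnot x hx.1
    have := hx.2
    omega
  have hcard2 : m2.card ≤ N - 1 := by
    have h5 : m1.card + m2.card = M.card := by rw [← hsplit] at hcard; rw [← Multiset.card_add, hsplit]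
    omega
  obtain ⟨rest, hr_nl, hr_ch, hr_lb, hr_sum⟩ :=
    ihN (N - 1) (by omega) m2 hcard2 (a + (n:ℤ) + 1) hmem2
  refine ⟨(a, t) :: rest, ?_, ?_, ?_, ?_⟩
  · intro q hq
    rcases List.mem_cons.1 hq with h | h
    · rw [h]; exact ht_ne
    · exact hr_nl q h
  · unfold List.Chain'; rw [List.isChain_cons]
    refine ⟨?_, hr_ch⟩
    intro q hq
    have hq' : q ∈ rest := by
      cases rest with
      | nil => simp at hq
      | cons y ys => simp at hq; rw [hq]; exact List.mem_cons_self
    have := hr_lb q hq'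
    rw [ht_size]
    omega
  · intro q hq
    rcases List.mem_cons.1 hq with h | h
    · rw [h]; exact hba
    · have := hr_lb q h
      have hn0 : (0:ℤ) ≤ (n:ℤ) := by positivity
      omega
  · rw [msum, List.map_cons, List.sum_cons]
    rw [show (List.map (fun p => p.2.rhoMS p.1) rest).sum = msum rest from rfl]
    rw [ht_rho, hr_sum, hsplit]

/-- Indexed forests with positive support are in bijection with
finitely supported `ℕ`-vectors supported on the positive integers, via
`F ↦ c(F)`. We state that `c(F)` is always such a vector, and that every such
vector arises from a unique positively supported indexed forest. -/
theorem forests_biject_with_nvectors :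
    (∀ F : IndexedForest, (∀ i ∈ F.Supp, 1 ≤ i) →
        ({i : ℤ | cOf F i ≠ 0}.Finite ∧ ∀ i : ℤ, i ≤ 0 → cOf F i = 0)) ∧
    (∀ c : ℤ → ℕ, {i : ℤ | c i ≠ 0}.Finite → (∀ i : ℤ, i ≤ 0 → c i = 0) →
        ∃! F : IndexedForest, (∀ i ∈ F.Supp, 1 ≤ i) ∧ cOf F = c) := by
  constructor
  · intro F hpos
    have hmem : ∀ i : ℤ, cOf F i ≠ 0 → 1 ≤ i := by
      intro i hi
      have hiM : i ∈ F.rhoMS := by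
        by_contra hcon
        exact hi (Multiset.count_eq_zero.2 hcon)
      have : i ∈ msum F.trees := hiM
      obtain ⟨p, hp, hx⟩ := mem_msum.1 this
      have hb := BT.mem_rhoMS hx
      exact hpos i ⟨p, hp, hb.1, hb.2⟩
    constructor
    · apply Set.Finite.subset (F.rhoMS.toFinset.finite_toSet)
      intro i hi
      simp only [Set.mem_setOf_eq] at hi
      simp only [Finset.coe_sort_coe, Multiset.mem_toFinset, Finset.mem_coe]
      by_contra hcon
      exact hi (Multiset.count_eq_zero.2 hcon)
    · intro i hi
      by_contra hcon
      have := hmem i hcon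
      omega
  · intro c hfin hzero
    set M : Multiset ℤ := ∑ i ∈ hfin.toFinset, Multiset.replicate (c i) i with hM
    have hcount : ∀ j : ℤ, M.count j = c j := by
      intro j
      rw [hM, Multiset.count_sum']
      rw [Finset.sum_eq_single j]
      · rw [Multiset.count_replicate, if_pos rfl]
      · intro i _ hne
        rw [Multiset.count_replicate, if_neg hne]
      · intro hj
        rw [Multiset.count_replicate, if_pos rfl]
        by_contra hc0
        exact hj (hfin.mem_toFinset.2 hc0)
    have hMlb : ∀ x ∈ M, (1:ℤ) ≤ x := by
      intro x hx
      have h1 : c x ≠ 0 := by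
        rw [← hcount x]
        exact Multiset.count_ne_zero.2 hx
      by_contra hcon
      exact h1 (hzero x (by omega))
    obtain ⟨ts, hnl, hch, hlb, hsum⟩ := forest_ex M.card M le_rfl 1 hMlb
    refine ⟨⟨ts, hnl, hch⟩, ⟨?_, ?_⟩, ?_⟩
    · intro i hi
      obtain ⟨p, hp, h1, h2⟩ := hi
      have := hlb p hp
      omega
    · funext j
      show (msum ts).count j = c j
      rw [hsum, hcount]
    · rintro F' ⟨hpos', hc'⟩
      have hsum' : msum F'.trees = msum ts := by
        rw [hsum]
        apply Multiset.ext.2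
        intro j
        rw [hcount j]
        have : cOf F' j = c j := by rw [hc']
        exact this
      have htrees : F'.trees = ts := forest_inj _ _ F'.nonempty F'.gaps hnl hch hsum'
      rcases F' with ⟨ts', h1, h2⟩
      simp only [IndexedForest.mk.injEq]
      exact htrees
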